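/- The number of triples (λ, s, t), where λ ∈ P_n and s, t are standard tableaux of shape λ, equals C(r,2)·C(2n,n) − r² + 2r, where C denotes the binomial coefficient; equivalently, Σ_{λ∈P_n} |Std(λ)|² = r + C(r,2)·(C(2n,n) − 2). (This number is the dimension of TL_{r,1,n}(q,ζ), i.e. p times the dimension of TL_{r,p,n}.) -/
import Mathlib


/-- The total order on boxes `(i,l)`: `(i,l) ≤ (i',l')` iff `l < l'`, or `l = l'`
and `i ≤ i'`. -/
def bLE {p d : ℕ} (b b' : Fin p × Fin d) : Prop :=
  b.2 < b'.2 ∨ (b.2 = b'.2 ∧ b.1 ≤ b'.1)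

/-- The strict version of the total order on boxes. -/
def bLT {p d : ℕ} (b b' : Fin p × Fin d) : Prop :=
  b.2 < b'.2 ∨ (b.2 = b'.2 ∧ b.1 < b'.1)

/-- The partial order `≤'` on boxes: `(i,l) ≤' (i',l')` iff `l < l'` or
`(i,l) = (i',l')`. -/
def bLE' {p d : ℕ} (b b' : Fin p × Fin d) : Prop :=
  b.2 < b'.2 ∨ b = b'

/-- A 3D multipartition of `n` with at most two nonempty components: either a
single column of `n` nodes on a box, or two columns of sizes `c₁ ≥ 1` and
`n - c₁ ≥ 1` on boxes `b₁ < b₂` (in the total order). -/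
inductive MP (p d n : ℕ) : Type where
  | single (b : Fin p × Fin d) : MP p d n
  | double (b₁ b₂ : Fin p × Fin d) (c₁ : ℕ)
      (hlt : bLT b₁ b₂) (hc1 : 1 ≤ c₁) (hc2 : c₁ < n) : MP p d n

/-- The dominance-type relation on multipartitions associated to a relation `rB`
on boxes; with `rB = bLE` this is `⊴` and with `rB = bLE'` this is `⊴'`.
For doubles, `a = c₁ - c₂ = 2c₁ - n`. -/
def dom {p d n : ℕ} (rB : (Fin p × Fin d) → (Fin p × Fin d) → Prop) :
    MP p d n → MP p d n → Prop
  | .single b₁, .single b₂ => rB b₁ b₂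
  | .single _, .double _ _ _ _ _ _ => False
  | .double b₁ _ _ _ _ _, .single b₃ => rB b₁ b₃
  | .double b₁ b₂ c _ _ _, .double b₃ b₄ c' _ _ _ =>
      rB b₁ b₃ ∧ rB b₂ b₄ ∧
      (|2 * (c : ℤ) - n| < |2 * (c' : ℤ) - n| ∨
       (|2 * (c : ℤ) - n| = |2 * (c' : ℤ) - n| ∧ 2 * (c : ℤ) - n ≥ 2 * (c' : ℤ) - n) ∨
       (|2 * (c : ℤ) - n| = |2 * (c' : ℤ) - n| ∧ 2 * (c : ℤ) - n < 2 * (c' : ℤ) - n ∧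
        rB b₂ b₃))

/-- A node: a (1-based) row index together with a box. -/
abbrev Nd (p d : ℕ) : Type := ℕ × (Fin p × Fin d)

/-- The set of nodes of a multipartition. -/
def nodes {p d n : ℕ} : MP p d n → Set (Nd p d)
  | .single b => {x | x.2 = b ∧ 1 ≤ x.1 ∧ x.1 ≤ n}
  | .double b₁ b₂ c₁ _ _ _ =>
      {x | (x.2 = b₁ ∧ 1 ≤ x.1 ∧ x.1 ≤ c₁) ∨ (x.2 = b₂ ∧ 1 ≤ x.1 ∧ x.1 ≤ n - c₁)}

/-- A tableau of shape `l`: a bijection from `{1, …, n}` (modelled as `Fin n`,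
with `m : Fin n` representing the entry `m + 1`) onto the nodes of `l`. -/
def IsTab {p d n : ℕ} (l : MP p d n) (t : Fin n → Nd p d) : Prop :=
  Function.Injective t ∧ Set.range t = nodes l

/-- A standard tableau: a tableau in which, within each column, the entries
increase with the row index. -/
def IsStd {p d n : ℕ} (l : MP p d n) (t : Fin n → Nd p d) : Prop :=
  IsTab l t ∧
  ∀ m m' : Fin n, (t m).2 = (t m').2 → (t m).1 < (t m').1 → m < m'

/-- The residue of a node: the node in row `a` on box `(i,l)` has residue
`(i, j_l + 1 − a) ∈ ℤ/pℤ × ℤ/eℤ`. -/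
def resNd {p d : ℕ} (e : ℕ) (j : Fin d → ZMod e) (x : Nd p d) : ZMod p × ZMod e :=
  ((x.2.1 : ZMod p), j x.2.2 + 1 - (x.1 : ZMod e))

/-- The separation hypothesis: the `2r` elements `(i, j_l)` and `(i, j_l − 1)`,
for `(i,l) ∈ 𝒦`, are pairwise distinct. -/
def SepHyp (p d e : ℕ) (j : Fin d → ZMod e) : Prop :=
  Function.Injective (fun x : (Fin p × Fin d) × Bool =>
    (((x.1.1 : ZMod p), j x.1.2 - (if x.2 then 1 else 0)) : ZMod p × ZMod e))

/-- The total order on nodes: `(a,(i,l)) < (a',(i',l'))` iff `a < a'`, or `a = a'`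
and `l < l'`, or `a = a'`, `l = l'` and `i < i'`. -/
def ndLT {p d : ℕ} (x y : Nd p d) : Prop :=
  x.1 < y.1 ∨ (x.1 = y.1 ∧ (x.2.2 < y.2.2 ∨ (x.2.2 = y.2.2 ∧ x.2.1 < y.2.1)))

-- ===== auxiliary development =====
namespace CardAux

open Finset

instance {p d : ℕ} (b b' : Fin p × Fin d) : Decidable (bLT b b') :=
  decidable_of_iff (b.2 < b'.2 ∨ (b.2 = b'.2 ∧ b.1 < b'.1)) Iff.rfl

lemma bLT_ne {p d : ℕ} {b b' : Fin p × Fin d} (h : bLT b b') : b ≠ b' := by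
  rintro rfl
  rcases h with h | ⟨_, h⟩ <;> exact absurd h (lt_irrefl _)

variable {p d n : ℕ}

/-- rank of `m` in `A` -/
def rnk (A : Finset (Fin n)) (m : Fin n) : ℕ := (A.filter (fun x => x < m)).card

lemma rnk_lt {A : Finset (Fin n)} {m : Fin n} (hm : m ∈ A) : rnk A m < A.card := by
  apply Finset.card_lt_card
  refine ⟨Finset.filter_subset _ _, fun h => ?_⟩
  have := h hm
  simp at this

lemma rnk_lt_rnk {A : Finset (Fin n)} {m m' : Fin n} (hm : m ∈ A) (h : m < m') :
    rnk A m < rnk A m' := by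
  apply Finset.card_lt_card
  have hsub : A.filter (fun x => x < m) ⊆ A.filter (fun x => x < m') := by
    intro x hx
    rw [Finset.mem_filter] at hx ⊢
    exact ⟨hx.1, lt_trans hx.2 h⟩
  rw [Finset.ssubset_iff_of_subset hsub]
  exact ⟨m, by simp [hm, h], by simp⟩

lemma rnk_inj_on {A : Finset (Fin n)} {m m' : Fin n} (hm : m ∈ A) (hm' : m' ∈ A)
    (h : rnk A m = rnk A m') : m = m' := by
  rcases lt_trichotomy m m' with hl | hl | hl
  · exact absurd h (Nat.ne_of_lt (rnk_lt_rnk hm hl))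
  · exact hl
  · exact absurd h.symm (Nat.ne_of_lt (rnk_lt_rnk hm' hl))

lemma rnk_surj (A : Finset (Fin n)) {k : ℕ} (hk : k < A.card) :
    ∃ m ∈ A, rnk A m = k := by
  classical
  let f : {x // x ∈ A} → Fin A.card := fun x => ⟨rnk A x.1, rnk_lt x.2⟩
  have hinj : Function.Injective f := by
    rintro ⟨x, hx⟩ ⟨y, hy⟩ hxy
    simpa [f] using rnk_inj_on hx hy (by simpa [f, Fin.ext_iff] using hxy)
  have hsurj : Function.Surjective f := by
    have hcard : Fintype.card {x // x ∈ A} = Fintype.card (Fin A.card) := by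
      simp [Fintype.card_coe]
    exact ((Fintype.bijective_iff_injective_and_card f).2 ⟨hinj, hcard⟩).2
  obtain ⟨⟨m, hm⟩, hfm⟩ := hsurj ⟨k, hk⟩
  exact ⟨m, hm, by simpa [f, Fin.ext_iff] using hfm⟩

/-- Key lemma: for a standard tableau, on a column set `A` with box `b` and
column height `c`, the row of `m` is `rnk A m + 1`, and `A.card = c`. -/
lemma row_formula {t : Fin n → Nd p d}
    (htinj : Function.Injective t)
    (hstd : ∀ m m' : Fin n, (t m).2 = (t m').2 → (t m).1 < (t m').1 → m < m')
    (A : Finset (Fin n)) (b : Fin p × Fin d) (c : ℕ)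
    (h1 : ∀ m ∈ A, (t m).2 = b ∧ 1 ≤ (t m).1 ∧ (t m).1 ≤ c)
    (h2 : ∀ a : ℕ, 1 ≤ a → a ≤ c → ∃ m ∈ A, t m = (a, b)) :
    (∀ m ∈ A, (t m).1 = rnk A m + 1) ∧ A.card = c := by
  have hbox : ∀ m ∈ A, ∀ m' ∈ A, (t m).2 = (t m').2 := by
    intro m hm m' hm'
    rw [(h1 m hm).1, (h1 m' hm').1]
  have hrowlt : ∀ m ∈ A, ∀ m' ∈ A, m < m' → (t m).1 < (t m').1 := by
    intro m hm m' hm' hlt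
    rcases lt_trichotomy (t m).1 (t m').1 with h | h | h
    · exact h
    · exact absurd (htinj (Prod.ext h (hbox m hm m' hm'))) (Fin.ne_of_lt hlt)
    · exact absurd (hstd m' m (hbox m' hm' m hm) h) (not_lt.2 hlt.le)
  constructor
  · intro m hm
    have hcard : (A.filter (fun x => x < m)).card = (Finset.Ico 1 (t m).1).card := by
      apply Finset.card_bij (fun m' _ => (t m').1)
      · intro m' hm'
        rw [Finset.mem_filter] at hm'
        rw [Finset.mem_Ico]
        exact ⟨(h1 m' hm'.1).2.1, hrowlt m' hm'.1 m hm hm'.2⟩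
      · intro x hx y hy hxy
        rw [Finset.mem_filter] at hx hy
        exact htinj (Prod.ext hxy (hbox x hx.1 y hy.1))
      · intro a ha
        rw [Finset.mem_Ico] at ha
        obtain ⟨m', hm', htm'⟩ := h2 a ha.1 (le_trans (le_of_lt ha.2) (h1 m hm).2.2)
        have hlt' : m' < m := by
          apply hstd m' m
          · rw [htm', (h1 m hm).1]
          · rw [htm']; exact ha.2
        exact ⟨m', Finset.mem_filter.2 ⟨hm', hlt'⟩, by rw [htm']⟩
    have h1m := (h1 m hm).2.1
    rw [rnk, hcard, Nat.card_Ico]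
    omega
  · have : A.card = (Finset.Icc 1 c).card := by
      apply Finset.card_bij (fun m' _ => (t m').1)
      · intro m' hm'
        rw [Finset.mem_Icc]
        exact ⟨(h1 m' hm').2.1, (h1 m' hm').2.2⟩
      · intro x hx y hy hxy
        exact htinj (Prod.ext hxy (hbox x hx y hy))
      · intro a ha
        rw [Finset.mem_Icc] at ha
        obtain ⟨m', hm', htm'⟩ := h2 a ha.1 ha.2
        exact ⟨m', hm', by rw [htm']⟩
    rw [this, Nat.card_Icc]
    omega

end CardAux

namespace CardAux
open Finset
variable {p d n : ℕ}

/-! ### Single column tableaux -/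

def tSingle (b : Fin p × Fin d) : Fin n → Nd p d := fun m => (m.val + 1, b)

lemma isStd_tSingle (b : Fin p × Fin d) : IsStd (MP.single (p := p) (d := d) (n := n) b) (tSingle b) := by
  refine ⟨⟨?_, ?_⟩, ?_⟩
  · intro m m' h
    simp only [tSingle, Prod.mk.injEq, Nat.add_right_cancel_iff] at h
    exact Fin.ext h.1
  · ext x
    simp only [Set.mem_range, tSingle, nodes, Set.mem_setOf_eq]
    constructor
    · rintro ⟨m, rfl⟩
      exact ⟨rfl, by omega, by omega⟩
    · rintro ⟨hb, h1, h2⟩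
      refine ⟨⟨x.1 - 1, by omega⟩, ?_⟩
      rw [← hb]
      exact Prod.ext (by simp; omega) rfl
  · intro m m' _ h
    simp only [tSingle] at h
    exact Fin.mk_lt_mk.2 (by omega)

lemma rnk_univ (m : Fin n) : rnk Finset.univ m = m.val := by
  rw [rnk]
  have : (Finset.univ.filter (fun x : Fin n => x < m)) = Finset.Iio m := by
    ext x; simp
  rw [this, Fin.card_Iio]

lemma isStd_single_unique {b : Fin p × Fin d} {t : Fin n → Nd p d}
    (h : IsStd (MP.single b) t) : t = tSingle b := by
  obtain ⟨⟨hinj, hr⟩, hstd⟩ := h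
  have hmem : ∀ m, t m ∈ nodes (MP.single (p := p) (d := d) (n := n) b) := by
    intro m; rw [← hr]; exact Set.mem_range_self m
  have key := row_formula hinj hstd Finset.univ b n
    (fun m _ => hmem m)
    (fun a ha1 ha2 => by
      have : ((a, b) : Nd p d) ∈ nodes (MP.single (p := p) (d := d) (n := n) b) :=
        ⟨rfl, ha1, ha2⟩
      rw [← hr] at this
      obtain ⟨m, hm⟩ := this
      exact ⟨m, Finset.mem_univ m, hm⟩)
  funext m
  have h1 := key.1 m (Finset.mem_univ m)
  rw [rnk_univ] at h1
  exact Prod.ext h1 (hmem m).1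

def stdSingleEquiv (b : Fin p × Fin d) :
    {t : Fin n → Nd p d // IsStd (MP.single b) t} ≃ PUnit where
  toFun _ := PUnit.unit
  invFun _ := ⟨tSingle b, isStd_tSingle b⟩
  left_inv t := Subtype.ext (isStd_single_unique t.2).symm
  right_inv _ := rfl

end CardAux

namespace CardAux
open Finset
variable {p d n : ℕ}

/-! ### Double column tableaux -/

def tDouble (b₁ b₂ : Fin p × Fin d) (S : Finset (Fin n)) : Fin n → Nd p d :=
  fun m => if m ∈ S then (rnk S m + 1, b₁) else (rnk Sᶜ m + 1, b₂)

variable {b₁ b₂ : Fin p × Fin d} {c₁ : ℕ}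

lemma isStd_tDouble (hlt : bLT b₁ b₂) (hc1 : 1 ≤ c₁) (hc2 : c₁ < n)
    {S : Finset (Fin n)} (hS : S.card = c₁) :
    IsStd (MP.double b₁ b₂ c₁ hlt hc1 hc2) (tDouble b₁ b₂ S) := by
  have hne : b₁ ≠ b₂ := bLT_ne hlt
  have hSc : Sᶜ.card = n - c₁ := by
    rw [Finset.card_compl, hS, Fintype.card_fin]
  refine ⟨⟨?_, ?_⟩, ?_⟩
  · intro m m' h
    by_cases hm : m ∈ S <;> by_cases hm' : m' ∈ S <;>
      simp only [tDouble, hm, hm', if_pos, if_neg, if_true, if_false,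
        Prod.mk.injEq] at h
    · exact rnk_inj_on hm hm' (by omega)
    · exact absurd h.2 hne
    · exact absurd h.2.symm hne
    · exact rnk_inj_on (Finset.mem_compl.2 hm) (Finset.mem_compl.2 hm') (by omega)
  · ext x
    simp only [Set.mem_range, nodes, Set.mem_setOf_eq]
    constructor
    · rintro ⟨m, rfl⟩
      by_cases hm : m ∈ S
      · left
        have := rnk_lt hm
        simp only [tDouble, hm, if_pos]
        exact ⟨by simp, by omega, by omega⟩
      · right
        have := rnk_lt (Finset.mem_compl.2 hm)
        simp only [tDouble, hm, if_neg, if_false]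
        exact ⟨by simp, by omega, by omega⟩
    · rintro (⟨hb, h1, h2⟩ | ⟨hb, h1, h2⟩)
      · obtain ⟨m, hm, hrnk⟩ := rnk_surj S (k := x.1 - 1) (by omega)
        refine ⟨m, ?_⟩
        simp only [tDouble, hm, if_pos]
        rw [← hb]
        exact Prod.ext (by simp [hrnk]; omega) rfl
      · obtain ⟨m, hm, hrnk⟩ := rnk_surj Sᶜ (k := x.1 - 1) (by omega)
        rw [Finset.mem_compl] at hm
        refine ⟨m, ?_⟩
        simp only [tDouble, hm, if_neg, if_false]
        rw [← hb]
        refine Prod.ext (by simp [hrnk]; omega) rfl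
  · intro m m' hb hrow
    rcases lt_trichotomy m m' with h | h | h
    · exact h
    · exact absurd hrow (by subst h; exact lt_irrefl _)
    · exfalso
      by_cases hm : m ∈ S <;> by_cases hm' : m' ∈ S <;>
        simp only [tDouble, hm, hm', if_pos, if_neg, if_true, if_false] at hb hrow
      · have := rnk_lt_rnk hm' h; omega
      · exact hne hb
      · exact hne hb.symm
      · have := rnk_lt_rnk (Finset.mem_compl.2 hm') h; omega

lemma double_row_formulas (hlt : bLT b₁ b₂) (hc1 : 1 ≤ c₁) (hc2 : c₁ < n)
    {t : Fin n → Nd p d} (h : IsStd (MP.double b₁ b₂ c₁ hlt hc1 hc2) t) :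
    letI S := Finset.univ.filter (fun m => (t m).2 = b₁)
    (∀ m ∈ S, (t m).1 = rnk S m + 1) ∧ S.card = c₁ ∧
    (∀ m ∈ Sᶜ, (t m).2 = b₂ ∧ (t m).1 = rnk Sᶜ m + 1) := by
  have hne : b₁ ≠ b₂ := bLT_ne hlt
  obtain ⟨⟨hinj, hr⟩, hstd⟩ := h
  set S : Finset (Fin n) := Finset.univ.filter (fun m => (t m).2 = b₁) with hSdef
  have hmem : ∀ m, t m ∈ nodes (MP.double b₁ b₂ c₁ hlt hc1 hc2) := by
    intro m; rw [← hr]; exact Set.mem_range_self m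
  have key1 := row_formula hinj hstd S b₁ c₁
    (fun m hm => by
      have hbm : (t m).2 = b₁ := (Finset.mem_filter.1 hm).2
      rcases hmem m with ⟨_, h1, h2⟩ | ⟨hb, _, _⟩
      · exact ⟨hbm, h1, h2⟩
      · exact absurd (hbm.symm.trans hb) hne)
    (fun a ha1 ha2 => by
      have : ((a, b₁) : Nd p d) ∈ nodes (MP.double b₁ b₂ c₁ hlt hc1 hc2) :=
        Or.inl ⟨rfl, ha1, ha2⟩
      rw [← hr] at this
      obtain ⟨m, hm⟩ := this
      refine ⟨m, Finset.mem_filter.2 ⟨Finset.mem_univ m, by rw [hm]⟩, hm⟩)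
  have key2 := row_formula hinj hstd Sᶜ b₂ (n - c₁)
    (fun m hm => by
      have hbm : (t m).2 ≠ b₁ := by
        rw [Finset.mem_compl] at hm
        intro hb
        exact hm (Finset.mem_filter.2 ⟨Finset.mem_univ m, hb⟩)
      rcases hmem m with ⟨hb, _, _⟩ | ⟨hb, h1, h2⟩
      · exact absurd hb hbm
      · exact ⟨hb, h1, h2⟩)
    (fun a ha1 ha2 => by
      have : ((a, b₂) : Nd p d) ∈ nodes (MP.double b₁ b₂ c₁ hlt hc1 hc2) :=
        Or.inr ⟨rfl, ha1, ha2⟩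
      rw [← hr] at this
      obtain ⟨m, hm⟩ := this
      refine ⟨m, Finset.mem_compl.2 (fun hmS => ?_), hm⟩
      have := (Finset.mem_filter.1 hmS).2
      rw [hm] at this
      exact hne this.symm)
  refine ⟨key1.1, key1.2, fun m hm => ?_⟩
  refine ⟨?_, key2.1 m hm⟩
  rw [Finset.mem_compl] at hm
  rcases hmem m with ⟨hb, _, _⟩ | ⟨hb, _, _⟩
  · exact absurd (Finset.mem_filter.2 ⟨Finset.mem_univ m, hb⟩) hm
  · exact hb

def stdDoubleEquiv (hlt : bLT b₁ b₂) (hc1 : 1 ≤ c₁) (hc2 : c₁ < n) :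
    {t : Fin n → Nd p d // IsStd (MP.double b₁ b₂ c₁ hlt hc1 hc2) t} ≃
      {S : Finset (Fin n) // S.card = c₁} where
  toFun t := ⟨Finset.univ.filter (fun m => ((t : Fin n → Nd p d) m).2 = b₁),
    (double_row_formulas hlt hc1 hc2 t.2).2.1⟩
  invFun S := ⟨tDouble b₁ b₂ S.1, isStd_tDouble hlt hc1 hc2 S.2⟩
  left_inv t := by
    obtain ⟨t, ht⟩ := t
    apply Subtype.ext
    obtain ⟨k1, _, k2⟩ := double_row_formulas hlt hc1 hc2 ht
    funext m
    by_cases hm : m ∈ Finset.univ.filter (fun m => (t m).2 = b₁)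
    · simp only [tDouble, hm, if_pos]
      exact (Prod.ext (k1 m hm).symm ((Finset.mem_filter.1 hm).2.symm))
    · have hm' := Finset.mem_compl.2 hm
      simp only [tDouble, Finset.mem_compl.1 hm', if_neg, if_false]
      exact (Prod.ext ((k2 m hm').2).symm ((k2 m hm').1.symm))
  right_inv S := by
    obtain ⟨S, hS⟩ := S
    apply Subtype.ext
    ext m
    simp only [Finset.mem_filter, Finset.mem_univ, true_and, tDouble]
    by_cases hm : m ∈ S
    · simp [hm]
    · simp [hm, (bLT_ne hlt).symm]

end CardAux

namespace CardAux
open Finset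
variable {p d n : ℕ}

/-! ### Counting boxes and pairs of boxes -/

def boxFin (p d : ℕ) : (Fin p × Fin d) ≃ Fin (d * p) :=
  (Equiv.prodComm _ _).trans finProdFinEquiv

lemma boxFin_val (b : Fin p × Fin d) : ((boxFin p d) b : ℕ) = b.1.val + p * b.2.val := rfl

lemma bLT_iff (b b' : Fin p × Fin d) : bLT b b' ↔ boxFin p d b < boxFin p d b' := by
  have h1 : b.1.val < p := b.1.isLt
  have h1' : b'.1.val < p := b'.1.isLt
  have hval : (boxFin p d b < boxFin p d b') ↔
      b.1.val + p * b.2.val < b'.1.val + p * b'.2.val := by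
    rw [Fin.lt_def, boxFin_val, boxFin_val]
  rw [bLT, hval]
  constructor
  · rintro (h | ⟨h, h2⟩)
    · have hm : p * (b.2.val + 1) ≤ p * b'.2.val :=
        Nat.mul_le_mul_left p (Nat.succ_le_of_lt (Fin.lt_def.1 h))
      have hr : p * (b.2.val + 1) = p * b.2.val + p := by ring
      linarith
    · rw [h]
      have := Fin.lt_def.1 h2
      omega
  · intro h
    rcases lt_trichotomy b.2 b'.2 with h2 | h2 | h2
    · exact Or.inl h2
    · refine Or.inr ⟨h2, Fin.lt_def.2 ?_⟩
      rw [h2] at h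
      omega
    · exfalso
      have hm : p * (b'.2.val + 1) ≤ p * b.2.val :=
        Nat.mul_le_mul_left p (Nat.succ_le_of_lt (Fin.lt_def.1 h2))
      have hr : p * (b'.2.val + 1) = p * b'.2.val + p := by ring
      linarith

def bbEquiv (p d : ℕ) : {bb : (Fin p × Fin d) × (Fin p × Fin d) // bLT bb.1 bb.2} ≃
    {q : Fin (d * p) × Fin (d * p) // q.1 < q.2} :=
  (Equiv.prodCongr (boxFin p d) (boxFin p d)).subtypeEquiv
    (fun bb => by simpa using bLT_iff bb.1 bb.2)

lemma card_ltPairs (k : ℕ) : Nat.card {q : Fin k × Fin k // q.1 < q.2} = k.choose 2 := by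
  rw [Nat.card_congr (Equiv.subtypeProdEquivSigmaSubtype (fun (a b : Fin k) => a < b))]
  rw [Nat.card_eq_fintype_card, Fintype.card_sigma]
  have hfib : ∀ a : Fin k, Fintype.card {b : Fin k // a < b} = k - 1 - a.val := by
    intro a
    rw [Fintype.card_subtype]
    have : Finset.univ.filter (fun b => a < b) = Finset.Ioi a := by ext; simp
    rw [this, Fin.card_Ioi]
  simp only [hfib]
  rw [Fin.sum_univ_eq_sum_range (fun i => k - 1 - i) k,
    Finset.sum_range_reflect (fun i => i) k, Finset.sum_range_id,
    Nat.choose_two_right]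

lemma card_bb (p d : ℕ) :
    Nat.card {bb : (Fin p × Fin d) × (Fin p × Fin d) // bLT bb.1 bb.2} = (p * d).choose 2 := by
  rw [Nat.card_congr (bbEquiv p d), card_ltPairs, Nat.mul_comm]

/-! ### Vandermonde -/

lemma sum_choose_sq (n : ℕ) :
    ∑ i ∈ Finset.range (n + 1), (n.choose i) ^ 2 = (2 * n).choose n := by
  rw [two_mul, Nat.add_choose_eq, Finset.Nat.sum_antidiagonal_eq_sum_range_succ_mk]
  apply Finset.sum_congr rfl
  intro i hi
  rw [Finset.mem_range] at hi
  rw [Nat.choose_symm (by omega : i ≤ n), pow_two]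

lemma sum_middle (n : ℕ) (hn : 1 ≤ n) :
    ∑ i ∈ Finset.range (n - 1), (n.choose (i + 1)) ^ 2 = (2 * n).choose n - 2 := by
  obtain ⟨m, rfl⟩ := Nat.exists_eq_succ_of_ne_zero (by omega : n ≠ 0)
  have h := sum_choose_sq (m + 1)
  rw [Finset.sum_range_succ', Finset.sum_range_succ] at h
  simp only [Nat.choose_zero_right, Nat.choose_self, one_pow] at h
  have hg : m + 1 - 1 = m := rfl
  rw [hg]
  simp only [Nat.succ_eq_add_one] at h ⊢
  omega

lemma two_le_central (n : ℕ) (hn : 1 ≤ n) : 2 ≤ (2 * n).choose n := by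
  obtain ⟨m, rfl⟩ := Nat.exists_eq_succ_of_ne_zero (by omega : n ≠ 0)
  have h := sum_choose_sq (m + 1)
  rw [Finset.sum_range_succ', Finset.sum_range_succ] at h
  simp only [Nat.choose_zero_right, Nat.choose_self, one_pow] at h
  simp only [Nat.succ_eq_add_one] at h ⊢
  omega

end CardAux

namespace CardAux
open Finset
variable {p d n : ℕ}

/-! ### Assembling -/

def mpEquiv (p d n : ℕ) :
    MP p d n ≃ (Fin p × Fin d) ⊕
      ({bb : (Fin p × Fin d) × (Fin p × Fin d) // bLT bb.1 bb.2} × Fin (n - 1)) where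
  toFun l :=
    match l with
    | .single b => .inl b
    | .double b₁ b₂ c h h1 h2 => .inr (⟨(b₁, b₂), h⟩, ⟨c - 1, by omega⟩)
  invFun y :=
    match y with
    | .inl b => .single b
    | .inr x => .double x.1.1.1 x.1.1.2 (x.2.val + 1) x.1.2 (Nat.le_add_left 1 _)
        (by have := x.2.isLt; omega)
  left_inv l := by
    cases l with
    | single b => rfl
    | double b₁ b₂ c h h1 h2 =>
      obtain ⟨c', rfl⟩ := Nat.exists_eq_succ_of_ne_zero (by omega : c ≠ 0)
      rfl
  right_inv y := by
    rcases y with b | ⟨⟨⟨b₁, b₂⟩, h⟩, i⟩ <;> rfl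

def e1 (p d n : ℕ) : {x : MP p d n × (Fin n → Nd p d) × (Fin n → Nd p d) //
      IsStd x.1 x.2.1 ∧ IsStd x.1 x.2.2} ≃
    Σ l : MP p d n,
      {t : Fin n → Nd p d // IsStd l t} × {t : Fin n → Nd p d // IsStd l t} where
  toFun x := ⟨x.1.1, ⟨x.1.2.1, x.2.1⟩, ⟨x.1.2.2, x.2.2⟩⟩
  invFun y := ⟨(y.1, y.2.1.1, y.2.2.1), y.2.1.2, y.2.2.2⟩
  left_inv x := rfl
  right_inv y := rfl

def sigmaSum {α β : Type*} (F : α ⊕ β → Type*) :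
    (Σ y : α ⊕ β, F y) ≃ (Σ a : α, F (.inl a)) ⊕ (Σ b : β, F (.inr b)) where
  toFun x :=
    match x with
    | ⟨.inl a, v⟩ => .inl ⟨a, v⟩
    | ⟨.inr b, v⟩ => .inr ⟨b, v⟩
  invFun x :=
    match x with
    | .inl ⟨a, v⟩ => ⟨.inl a, v⟩
    | .inr ⟨b, v⟩ => ⟨.inr b, v⟩
  left_inv x := by rcases x with ⟨a | b, v⟩ <;> rfl
  right_inv x := by rcases x with ⟨a, v⟩ | ⟨b, v⟩ <;> rfl

def bigEquiv (p d n : ℕ) :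
    {x : MP p d n × (Fin n → Nd p d) × (Fin n → Nd p d) //
        IsStd x.1 x.2.1 ∧ IsStd x.1 x.2.2} ≃
    ((Σ _b : Fin p × Fin d, (PUnit.{1} × PUnit.{1})) ⊕
     (Σ x : {bb : (Fin p × Fin d) × (Fin p × Fin d) // bLT bb.1 bb.2} × Fin (n - 1),
       ({S : Finset (Fin n) // S.card = x.2.val + 1} ×
        {S : Finset (Fin n) // S.card = x.2.val + 1}))) :=
  (e1 p d n).trans
   ((Equiv.sigmaCongrLeft'
      (β := fun l : MP p d n =>
        ({t : Fin n → Nd p d // IsStd l t} × {t : Fin n → Nd p d // IsStd l t}))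
      (mpEquiv p d n)).trans
    ((sigmaSum _).trans
     (Equiv.sumCongr
       (Equiv.sigmaCongrRight
         (fun b => Equiv.prodCongr (stdSingleEquiv (n := n) b) (stdSingleEquiv (n := n) b)))
       (Equiv.sigmaCongrRight
         (fun x => Equiv.prodCongr
           (stdDoubleEquiv (b₁ := x.1.1.1) (b₂ := x.1.1.2) (c₁ := x.2.val + 1)
             x.1.2 (Nat.le_add_left 1 _) (by have := x.2.isLt; omega))
           (stdDoubleEquiv (b₁ := x.1.1.1) (b₂ := x.1.1.2) (c₁ := x.2.val + 1)
             x.1.2 (Nat.le_add_left 1 _) (by have := x.2.isLt; omega)))))))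

lemma card_big (p d n : ℕ) (hn : 1 ≤ n) :
    Nat.card {x : MP p d n × (Fin n → Nd p d) × (Fin n → Nd p d) //
        IsStd x.1 x.2.1 ∧ IsStd x.1 x.2.2}
      = p * d + (p * d).choose 2 * ((2 * n).choose n - 2) := by
  classical
  rw [Nat.card_congr (bigEquiv p d n), Nat.card_sum]
  have hL : Nat.card (Σ _b : Fin p × Fin d, (PUnit.{1} × PUnit.{1})) = p * d := by
    rw [Nat.card_eq_fintype_card]
    simp
  have hR : Nat.card
      (Σ x : {bb : (Fin p × Fin d) × (Fin p × Fin d) // bLT bb.1 bb.2} × Fin (n - 1),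
        ({S : Finset (Fin n) // S.card = x.2.val + 1} ×
         {S : Finset (Fin n) // S.card = x.2.val + 1}))
      = (p * d).choose 2 * ((2 * n).choose n - 2) := by
    rw [Nat.card_eq_fintype_card, Fintype.card_sigma]
    have hfib : ∀ x : {bb : (Fin p × Fin d) × (Fin p × Fin d) // bLT bb.1 bb.2} × Fin (n - 1),
        Fintype.card
          ({S : Finset (Fin n) // S.card = x.2.val + 1} ×
           {S : Finset (Fin n) // S.card = x.2.val + 1})
          = (n.choose (x.2.val + 1)) ^ 2 := by
      intro x
      rw [Fintype.card_prod, Fintype.card_finset_len, Fintype.card_fin, pow_two]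
    simp only [hfib]
    rw [Fintype.sum_prod_type]
    dsimp only
    rw [Finset.sum_const, smul_eq_mul]
    congr 1
    · rw [Finset.card_univ, ← Nat.card_eq_fintype_card, card_bb]
    · rw [Fin.sum_univ_eq_sum_range (fun i => (n.choose (i + 1)) ^ 2) (n - 1)]
      exact sum_middle n hn
  rw [hL, hR]

end CardAux

/-- the number of triples `(λ, s, t)` with `λ ∈ P_n` and
`s, t ∈ Std(λ)` equals `C(r,2)·C(2n,n) − r² + 2r = r + C(r,2)·(C(2n,n) − 2)`,
where `r = pd`. -/
theorem card_cellular_basis (p d n r : ℕ) (hp : 1 ≤ p) (hd : 1 ≤ d) (hn : 1 ≤ n)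
    (hr : r = p * d) :
    ((Nat.card {x : MP p d n × (Fin n → Nd p d) × (Fin n → Nd p d) //
        IsStd x.1 x.2.1 ∧ IsStd x.1 x.2.2} : ℤ)
      = (r.choose 2 : ℤ) * ((2 * n).choose n : ℤ) - (r : ℤ) ^ 2 + 2 * r) ∧
    (Nat.card {x : MP p d n × (Fin n → Nd p d) × (Fin n → Nd p d) //
        IsStd x.1 x.2.1 ∧ IsStd x.1 x.2.2}
      = r + r.choose 2 * ((2 * n).choose n - 2)) := by
  subst hr
  have h2 := CardAux.card_big p d n hn
  refine ⟨?_, h2⟩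
  rw [h2]
  have hc2 : 2 ≤ (2 * n).choose n := CardAux.two_le_central n hn
  have hr1 : 1 ≤ p * d := Nat.one_le_iff_ne_zero.2 (Nat.mul_ne_zero (by omega) (by omega))
  have hkey : (p * d).choose 2 * 2 = (p * d) * ((p * d) - 1) := by
    rw [Nat.choose_two_right]
    apply Nat.div_mul_cancel
    have he := Nat.even_mul_succ_self (p * d - 1)
    rw [Nat.sub_add_cancel hr1] at he
    rw [Nat.mul_comm]
    exact he.two_dvd
  have hkeyZ : (((p * d).choose 2 : ℤ)) * 2 = ((p : ℤ) * d) ^ 2 - (p : ℤ) * d := by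
    have h := congrArg (fun x : ℕ => (x : ℤ)) hkey
    push_cast [Nat.cast_sub hr1] at h
    rw [h]
    ring
  push_cast [Nat.cast_sub hc2]
  linarith [hkeyZ]
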